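/- Let V be a finite-dimensional real inner product space with commuting orthogonal linear involutions σ and θ, and let A : V → V be a self-adjoint positive-definite invertible linear operator satisfying σ ∘ A = A⁻¹ ∘ σ and θ ∘ A = A⁻¹ ∘ θ. With q = ker(σ+id), k = ker(θ-id), p = ker(θ+id), h = ker(σ-id), one has the direct sum decomposition V = q ⊕ (k ∩ h) ⊕ A(p ∩ h). -/

import Mathlib

theorem stmt_7 {V : Type*} [NormedAddCommGroup V] [InnerProductSpace ℝ V]
    [FiniteDimensional ℝ V]
    (σ θ : V →ₗ[ℝ] V) (hσ : σ ∘ₗ σ = LinearMap.id) (hθ : θ ∘ₗ θ = LinearMap.id)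
    (hcomm : σ ∘ₗ θ = θ ∘ₗ σ)
    (hσorth : ∀ x y : V, (inner ℝ (σ x) (σ y) : ℝ) = inner ℝ x y)
    (hθorth : ∀ x y : V, (inner ℝ (θ x) (θ y) : ℝ) = inner ℝ x y)
    (A : V ≃ₗ[ℝ] V)
    (hAsa : ∀ x y : V, (inner ℝ (A x) y : ℝ) = inner ℝ x (A y))
    (hApd : ∀ x : V, x ≠ 0 → (0 : ℝ) < inner ℝ (A x) x)
    (hσA : ∀ v : V, σ (A v) = A.symm (σ v))
    (hθA : ∀ v : V, θ (A v) = A.symm (θ v)) :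
    ∀ v : V, ∃! w : (LinearMap.ker (σ + LinearMap.id)) ×
        (LinearMap.ker (θ - LinearMap.id) ⊓ LinearMap.ker (σ - LinearMap.id) :
          Submodule ℝ V) ×
        (Submodule.map (A : V →ₗ[ℝ] V)
          (LinearMap.ker (θ + LinearMap.id) ⊓ LinearMap.ker (σ - LinearMap.id)) :
          Submodule ℝ V),
      v = (w.1 : V) + (w.2.1 : V) + (w.2.2 : V) := by
  classical
  -- pointwise basic facts
  have sσ : ∀ u : V, σ (σ u) = u := fun u => by
    simpa using LinearMap.congr_fun hσ u
  have sθ : ∀ u : V, θ (θ u) = u := fun u => by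
    simpa using LinearMap.congr_fun hθ u
  have scomm : ∀ u : V, σ (θ u) = θ (σ u) := fun u => by
    simpa using LinearMap.congr_fun hcomm u
  have sA' : ∀ u : V, σ (A.symm u) = A (σ u) := fun u => by
    have h := hσA (A.symm u)
    rw [A.apply_symm_apply] at h
    rw [h, A.apply_symm_apply]
  have tA' : ∀ u : V, θ (A.symm u) = A (θ u) := fun u => by
    have h := hθA (A.symm u)
    rw [A.apply_symm_apply] at h
    rw [h, A.apply_symm_apply]
  have hApd' : ∀ u : V, u ≠ 0 → (0 : ℝ) < inner ℝ (A.symm u) u := by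
    intro u hu
    have hu' : A.symm u ≠ 0 := by
      intro h
      apply hu
      have := congrArg A h
      simpa using this
    have h := hApd (A.symm u) hu'
    rw [A.apply_symm_apply] at h
    rwa [real_inner_comm] at h
  -- submodules
  set Q : Submodule ℝ V := LinearMap.ker (σ + LinearMap.id) with hQdef
  set KH : Submodule ℝ V :=
    LinearMap.ker (θ - LinearMap.id) ⊓ LinearMap.ker (σ - LinearMap.id) with hKHdef
  set PH : Submodule ℝ V :=
    LinearMap.ker (θ + LinearMap.id) ⊓ LinearMap.ker (σ - LinearMap.id) with hPHdef
  have memQ : ∀ x : V, x ∈ Q ↔ σ x = -x := by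
    intro x
    rw [hQdef]
    simp [LinearMap.mem_ker, add_eq_zero_iff_eq_neg]
  have memKH : ∀ x : V, x ∈ KH ↔ θ x = x ∧ σ x = x := by
    intro x
    rw [hKHdef]
    simp [Submodule.mem_inf, LinearMap.mem_ker, sub_eq_zero]
  have memPH : ∀ x : V, x ∈ PH ↔ θ x = -x ∧ σ x = x := by
    intro x
    rw [hPHdef]
    simp [Submodule.mem_inf, LinearMap.mem_ker, add_eq_zero_iff_eq_neg, sub_eq_zero]
  -- the operator B = A + A⁻¹ preserves PH
  set B : V →ₗ[ℝ] V := (A : V →ₗ[ℝ] V) + (A.symm : V →ₗ[ℝ] V) with hBdef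
  have hBapp : ∀ u : V, B u = A u + A.symm u := fun u => by
    rw [hBdef]; simp
  have hBmem : ∀ x ∈ PH, B x ∈ PH := by
    intro x hx
    obtain ⟨h1, h2⟩ := (memPH x).mp hx
    rw [memPH, hBapp]
    constructor
    · rw [map_add, hθA, tA', h1, map_neg, map_neg]
      abel
    · rw [map_add, hσA, sA', h2]
      abel
  set L : PH →ₗ[ℝ] PH := B.restrict hBmem with hLdef
  have Linj : Function.Injective L := by
    rw [← LinearMap.ker_eq_bot, LinearMap.ker_eq_bot']
    intro m hm
    have hm' : B (m : V) = 0 := by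
      have := congrArg (Subtype.val) hm
      simpa [hLdef, LinearMap.restrict_apply] using this
    have hmz : (m : V) = 0 := by
      by_contra hne
      have h1 := hApd (m : V) hne
      have h2 := hApd' (m : V) hne
      have h3 : (inner ℝ (B (m : V)) (m : V) : ℝ) = 0 := by
        rw [hm', inner_zero_left]
      rw [hBapp, inner_add_left] at h3
      linarith
    exact Subtype.ext hmz
  have Lsurj : Function.Surjective L :=
    LinearMap.injective_iff_surjective.mp Linj
  -- key cancellation lemma
  have key : ∀ x₀ y₀ u₀ : V, σ x₀ = -x₀ → θ y₀ = y₀ → σ y₀ = y₀ →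
      θ u₀ = -u₀ → σ u₀ = u₀ → x₀ + y₀ + A u₀ = 0 →
      x₀ = 0 ∧ y₀ = 0 ∧ u₀ = 0 := by
    intro x₀ y₀ u₀ e1 e2 e3 e4 e5 hsum
    have hθAu : θ (A u₀) = -(A.symm u₀) := by rw [hθA, e4, map_neg]
    have hσAu : σ (A u₀) = A.symm u₀ := by rw [hσA, e5]
    have hθA'u : θ (A.symm u₀) = -(A u₀) := by rw [tA', e4, map_neg]
    have h := congrArg (fun t => t + σ t - θ t - θ (σ t)) hsum
    simp only [map_add, map_sub, map_neg, map_zero, e1, e2, e3, hσAu, hθAu,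
      hθA'u, add_zero, zero_add, sub_zero] at h
    -- h should now be an equation with θ x₀ atoms cancelling
    have hB0 : A u₀ + A.symm u₀ = 0 := by
      have h2 : (2 : ℝ) • (A u₀ + A.symm u₀) = 0 := by
        rw [← h]; module
      have h3 := smul_eq_zero.mp h2
      rcases h3 with h3 | h3
      · norm_num at h3
      · exact h3
    have hu0 : u₀ = 0 := by
      by_contra hne
      have h1 := hApd u₀ hne
      have h2 := hApd' u₀ hne
      have h3 : (inner ℝ (A u₀ + A.symm u₀) u₀ : ℝ) = 0 := by
        rw [hB0, inner_zero_left]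
      rw [inner_add_left] at h3
      linarith
    have hxy : x₀ + y₀ = 0 := by
      have := hsum
      rw [hu0, map_zero, add_zero] at this
      exact this
    have hσxy : -x₀ + y₀ = 0 := by
      have := congrArg σ hxy
      rw [map_add, e1, e3, map_zero] at this
      exact this
    have hx0 : x₀ = 0 := by
      have h2x : (2 : ℝ) • x₀ = (x₀ + y₀) + -(-x₀ + y₀) := by module
      rw [hxy, hσxy] at h2x
      simpa using h2x
    have hy0 : y₀ = 0 := by
      have := hxy
      rw [hx0, zero_add] at this
      exact this
    exact ⟨hx0, hy0, hu0⟩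
  -- main construction
  intro v
  set y : V := (4⁻¹ : ℝ) • (v + σ v + θ v + θ (σ v)) with hy_def
  set p0 : V := (2⁻¹ : ℝ) • (v + σ v - θ v - θ (σ v)) with hp0_def
  have hyKH : y ∈ KH := by
    rw [memKH]
    constructor
    · rw [hy_def]
      simp only [map_smul, map_add, sθ, scomm]
      module
    · rw [hy_def]
      simp only [map_smul, map_add, sσ, scomm]
      module
  have hp0PH : p0 ∈ PH := by
    rw [memPH]
    constructor
    · rw [hp0_def]
      simp only [map_smul, map_add, map_sub, sθ, scomm]
      module
    · rw [hp0_def]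
      simp only [map_smul, map_add, map_sub, sσ, scomm]
      module
  obtain ⟨w0, hw0⟩ := Lsurj ⟨p0, hp0PH⟩
  have hw0PH := w0.2
  obtain ⟨hθw, hσw⟩ := (memPH (w0 : V)).mp hw0PH
  have hBw : A (w0 : V) + A.symm (w0 : V) = p0 := by
    have := congrArg (Subtype.val) hw0
    rw [hLdef] at this
    simpa [LinearMap.restrict_apply, hBapp] using this
  set z : V := A (w0 : V) with hz_def
  set x : V := v - y - z with hx_def
  have hσz : σ z = A.symm (w0 : V) := by rw [hz_def, hσA, hσw]
  have hxQ : x ∈ Q := by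
    rw [memQ, hx_def]
    rw [map_sub, map_sub, hσz]
    have hσy : σ y = y := ((memKH y).mp hyKH).2
    rw [hσy]
    have hAs : A.symm (w0 : V) = p0 - A (w0 : V) := by
      rw [← hBw]; abel
    rw [hAs, ← hz_def]
    rw [hp0_def, hy_def]
    module
  have hzAPH : z ∈ Submodule.map (A : V →ₗ[ℝ] V) PH := ⟨(w0 : V), hw0PH, rfl⟩
  refine ⟨⟨⟨x, hxQ⟩, ⟨y, hyKH⟩, ⟨z, hzAPH⟩⟩, ?_, ?_⟩
  · show v = x + y + z
    rw [hx_def]; abel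
  · rintro ⟨⟨x', hx'⟩, ⟨y', hy'⟩, z'⟩ hveq
    obtain ⟨u', hu'PH, hz'⟩ := z'.2
    simp only at hveq
    have hmine : v = x + y + z := by rw [hx_def]; abel
    have h0 : (x' + y' + (z' : V)) - (x + y + A (w0 : V)) = 0 := by
      rw [← hveq, ← hz_def, ← hmine, sub_self]
    have hdiff : (x' - x) + (y' - y) + A (u' - (w0 : V)) = 0 := by
      have hrw : (x' - x) + (y' - y) + A (u' - (w0 : V))
          = (x' + y' + (z' : V)) - (x + y + A (w0 : V)) := by
        have hz'' : A u' = (z' : V) := hz'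
        rw [map_sub, hz'']
        abel
      rw [hrw, h0]
    -- memberships of differences
    have ex' : σ x' = -x' := (memQ x').mp hx'
    have exx : σ x = -x := (memQ x).mp hxQ
    obtain ⟨ey1', ey2'⟩ := (memKH y').mp hy'
    obtain ⟨ey1, ey2⟩ := (memKH y).mp hyKH
    obtain ⟨eu1', eu2'⟩ := (memPH u').mp hu'PH
    have k := key (x' - x) (y' - y) (u' - (w0 : V))
      (by rw [map_sub, ex', exx]; abel)
      (by rw [map_sub, ey1', ey1])
      (by rw [map_sub, ey2', ey2])
      (by rw [map_sub, eu1', hθw]; abel)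
      (by rw [map_sub, eu2', hσw])
      hdiff
    obtain ⟨k1, k2, k3⟩ := k
    have e1 : x' = x := by rwa [sub_eq_zero] at k1
    have e2 : y' = y := by rwa [sub_eq_zero] at k2
    have e3 : (z' : V) = z := by
      have : u' = (w0 : V) := by rwa [sub_eq_zero] at k3
      rw [← hz', this, hz_def]
      rfl
    exact Prod.ext (Subtype.ext e1) (Prod.ext (Subtype.ext e2) (Subtype.ext e3))
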